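/- arXiv:1610.01976 — 2 statements merged into one kernel-verified Lean document; each statement's English description precedes it below -/
import Mathlib

section
/- Let κ ≥ 0 and n ≥ 1. Suppose H : S → ℝ is a function on the unit sphere of an n-dimensional complex Hermitian vector space (V, ĝ) given by H(ξ) = R̂(ξ, ξ̄, ξ, ξ̄) for a curvature-type tensor R̂ (Hermitian bilinear in the first and second pairs, symmetric under exchange of the pairs), and assume H(ξ) ≤ −κ·|ξ|⁴_{ĝ} for all ξ ∈ V. Then for any Hermitian positive-definite form g on V, g^{i\bar j} g^{k\bar l} R̂_{i\bar j k\bar l} ≤ −κ·(n+1)/(2n)·(tr_g ĝ)². -/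
open scoped ComplexOrder
open Finset Complex
open scoped Matrix

namespace RoydenAux

noncomputable def om (t : ZMod 4) : ℂ := Complex.I ^ t.val

lemma om0 : om 0 = 1 := by simp [om, show ((0:ZMod 4)).val = 0 from rfl]
lemma om1 : om 1 = Complex.I := by simp [om, show ((1:ZMod 4)).val = 1 from rfl]
lemma om2 : om 2 = -1 := by
  simp [om, show ((2:ZMod 4)).val = 2 from rfl, pow_succ, Complex.I_sq]
lemma om3 : om 3 = -Complex.I := by
  simp [om, show ((3:ZMod 4)).val = 3 from rfl, pow_succ]

lemma zmod4_sum (f : ZMod 4 → ℂ) : ∑ t : ZMod 4, f t = f 0 + f 1 + f 2 + f 3 := by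
  show ∑ t : Fin 4, f t = _
  exact Fin.sum_univ_four f

lemma sum_om_pow (p q : ℕ) (hp : p ≤ 2) (hq : q ≤ 2) :
    ∑ t : ZMod 4, om t ^ p * (starRingEnd ℂ) (om t) ^ q = if p = q then 4 else 0 := by
  rw [zmod4_sum]
  interval_cases p <;> interval_cases q <;> simp [om0, om1, om2, om3] <;> ring_nf

lemma pair_count {n : ℕ} (a b c d : Fin n)
    (h : ∀ x, (if x = a then 1 else 0) + (if x = c then 1 else 0)
      = ((if x = b then 1 else 0) + (if x = d then 1 else 0) : ℕ)) :
    (a = b ∧ c = d) ∨ (a = d ∧ c = b) := by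
  have hm : ({a, c} : Multiset (Fin n)) = {b, d} := by
    ext x
    have hx := h x
    simp only [Multiset.insert_eq_cons, Multiset.count_cons, Multiset.count_singleton]
    omega
  rw [Multiset.insert_eq_cons, Multiset.insert_eq_cons, Multiset.cons_eq_cons] at hm
  rcases hm with ⟨hab, hcd⟩ | ⟨-, cs, hcs, hds⟩
  · exact Or.inl ⟨hab, Multiset.singleton_inj.mp hcd⟩
  · rcases (Multiset.singleton_eq_cons_iff _).mp hcs with ⟨hcb, hcs0⟩
    subst hcs0
    rcases (Multiset.singleton_eq_cons_iff _).mp hds with ⟨hda, -⟩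
    exact Or.inr ⟨hda.symm, hcb⟩

lemma W4 {n : ℕ} (a b c d : Fin n) :
    ∑ f : Fin n → ZMod 4,
      om (f a) * (starRingEnd ℂ) (om (f b)) * om (f c) * (starRingEnd ℂ) (om (f d))
    = if (a = b ∧ c = d) ∨ (a = d ∧ c = b) then (4:ℂ)^n else 0 := by
  set P : Fin n → ℕ := fun x => (if x = a then 1 else 0) + (if x = c then 1 else 0) with hP
  set Q : Fin n → ℕ := fun x => (if x = b then 1 else 0) + (if x = d then 1 else 0) with hQ
  have key : ∀ f : Fin n → ZMod 4,
      om (f a) * (starRingEnd ℂ) (om (f b)) * om (f c) * (starRingEnd ℂ) (om (f d))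
      = ∏ x, (om (f x) ^ P x * (starRingEnd ℂ) (om (f x)) ^ Q x) := by
    intro f
    simp only [hP, hQ, pow_add, pow_ite, pow_one, pow_zero, Finset.prod_mul_distrib,
      Finset.prod_ite_eq', Finset.mem_univ, if_pos]
    ring
  calc ∑ f : Fin n → ZMod 4,
        om (f a) * (starRingEnd ℂ) (om (f b)) * om (f c) * (starRingEnd ℂ) (om (f d))
      = ∑ f : Fin n → ZMod 4, ∏ x, (om (f x) ^ P x * (starRingEnd ℂ) (om (f x)) ^ Q x) := by
        exact Finset.sum_congr rfl fun f _ => key f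
    _ = ∏ x, ∑ t : ZMod 4, (om t ^ P x * (starRingEnd ℂ) (om t) ^ Q x) := by
        rw [Finset.prod_univ_sum, Fintype.piFinset_univ]
    _ = ∏ x : Fin n, (if P x = Q x then (4:ℂ) else 0) := by
        refine Finset.prod_congr rfl fun x _ => sum_om_pow _ _ ?_ ?_ <;>
          simp only [hP, hQ] <;> split_ifs <;> norm_num
    _ = if (a = b ∧ c = d) ∨ (a = d ∧ c = b) then (4:ℂ)^n else 0 := by
        by_cases hc : ∀ x, P x = Q x
        · rw [if_pos (pair_count a b c d hc)]
          rw [Finset.prod_congr rfl fun x _ => if_pos (hc x), Finset.prod_const]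
          simp
        · push_neg at hc
          obtain ⟨x0, hx0⟩ := hc
          have hz : (if P x0 = Q x0 then (4:ℂ) else 0) = 0 := if_neg hx0
          rw [Finset.prod_eq_zero (Finset.mem_univ x0) hz, if_neg]
          rintro (⟨rfl, rfl⟩ | ⟨rfl, rfl⟩)
          · exact hx0 rfl
          · exact hx0 (add_comm _ _)

lemma W2 {n : ℕ} (a b : Fin n) :
    ∑ f : Fin n → ZMod 4, om (f a) * (starRingEnd ℂ) (om (f b))
    = if a = b then (4:ℂ)^n else 0 := by
  set P : Fin n → ℕ := fun x => (if x = a then 1 else 0) with hP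
  set Q : Fin n → ℕ := fun x => (if x = b then 1 else 0) with hQ
  have key : ∀ f : Fin n → ZMod 4,
      om (f a) * (starRingEnd ℂ) (om (f b))
      = ∏ x, (om (f x) ^ P x * (starRingEnd ℂ) (om (f x)) ^ Q x) := by
    intro f
    simp only [hP, hQ, pow_ite, pow_one, pow_zero, Finset.prod_mul_distrib,
      Finset.prod_ite_eq', Finset.mem_univ, if_pos]
  calc ∑ f : Fin n → ZMod 4, om (f a) * (starRingEnd ℂ) (om (f b))
      = ∑ f : Fin n → ZMod 4, ∏ x, (om (f x) ^ P x * (starRingEnd ℂ) (om (f x)) ^ Q x) := by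
        exact Finset.sum_congr rfl fun f _ => key f
    _ = ∏ x, ∑ t : ZMod 4, (om t ^ P x * (starRingEnd ℂ) (om t) ^ Q x) := by
        rw [Finset.prod_univ_sum, Fintype.piFinset_univ]
    _ = ∏ x : Fin n, (if P x = Q x then (4:ℂ) else 0) := by
        refine Finset.prod_congr rfl fun x _ => sum_om_pow _ _ ?_ ?_ <;>
          simp only [hP, hQ] <;> split_ifs <;> norm_num
    _ = if a = b then (4:ℂ)^n else 0 := by
        by_cases hc : ∀ x, P x = Q x
        · have hab : a = b := by
            have h := hc a
            simp only [hP, hQ, if_pos rfl] at h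
            by_cases hab : a = b
            · exact hab
            · rw [if_neg hab] at h; omega
          rw [if_pos hab]
          rw [Finset.prod_congr rfl fun x _ => if_pos (hc x), Finset.prod_const]
          simp
        · push_neg at hc
          obtain ⟨x0, hx0⟩ := hc
          have hz : (if P x0 = Q x0 then (4:ℂ) else 0) = 0 := if_neg hx0
          rw [Finset.prod_eq_zero (Finset.mem_univ x0) hz, if_neg]
          rintro rfl
          exact hx0 rfl


variable {n : ℕ}

-- swap a block of 4 nested sums past another block of 4
lemma nest8 (h : Fin n → Fin n → Fin n → Fin n → Fin n → Fin n → Fin n → Fin n → ℂ) :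
    ∑ i, ∑ j, ∑ k, ∑ l, ∑ a, ∑ b, ∑ c, ∑ d, h i j k l a b c d
      = ∑ a, ∑ b, ∑ c, ∑ d, ∑ i, ∑ j, ∑ k, ∑ l, h i j k l a b c d := by
  have h8 := Finset.sum_comm (s := (univ : Finset (Fin n × Fin n × Fin n × Fin n)))
    (t := (univ : Finset (Fin n × Fin n × Fin n × Fin n)))
    (f := fun p q => h p.1 p.2.1 p.2.2.1 p.2.2.2 q.1 q.2.1 q.2.2.1 q.2.2.2)
  simpa [Fintype.sum_prod_type] using h8

lemma nest44 {α : Type*} [Fintype α] (h : α → Fin n → Fin n → Fin n → Fin n → ℂ) :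
    ∑ f : α, ∑ a, ∑ b, ∑ c, ∑ d, h f a b c d
      = ∑ a, ∑ b, ∑ c, ∑ d, ∑ f : α, h f a b c d := by
  have h5 := Finset.sum_comm (s := (univ : Finset α))
    (t := (univ : Finset (Fin n × Fin n × Fin n × Fin n)))
    (f := fun f q => h f q.1 q.2.1 q.2.2.1 q.2.2.2)
  simpa [Fintype.sum_prod_type] using h5

lemma nest42 (h : Fin n → Fin n → Fin n → Fin n → Fin n → Fin n → ℂ) :
    ∑ i, ∑ j, ∑ k, ∑ l, ∑ a, ∑ c, h i j k l a c
      = ∑ a, ∑ c, ∑ i, ∑ j, ∑ k, ∑ l, h i j k l a c := by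
  have h6 := Finset.sum_comm (s := (univ : Finset (Fin n × Fin n × Fin n × Fin n)))
    (t := (univ : Finset (Fin n × Fin n)))
    (f := fun p q => h p.1 p.2.1 p.2.2.1 p.2.2.2 q.1 q.2)
  simpa [Fintype.sum_prod_type] using h6

lemma nest21 (h : Fin n → Fin n → Fin n → ℂ) :
    ∑ i, ∑ j, ∑ a, h i j a = ∑ a, ∑ i, ∑ j, h i j a := by
  have h3 := Finset.sum_comm (s := (univ : Finset (Fin n × Fin n)))
    (t := (univ : Finset (Fin n)))
    (f := fun p q => h p.1 p.2 q)
  simpa [Fintype.sum_prod_type] using h3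

lemma nest22 {α : Type*} [Fintype α] (h : α → Fin n → Fin n → ℂ) :
    ∑ f : α, ∑ a, ∑ b, h f a b = ∑ a, ∑ b, ∑ f : α, h f a b := by
  have h3 := Finset.sum_comm (s := (univ : Finset α))
    (t := (univ : Finset (Fin n × Fin n)))
    (f := fun f q => h f q.1 q.2)
  simpa [Fintype.sum_prod_type] using h3

-- rotate: ∑b∑c∑d → ∑c∑d∑b
lemma rot3 (h : Fin n → Fin n → Fin n → ℂ) :
    ∑ b, ∑ c, ∑ d, h b c d = ∑ c, ∑ d, ∑ b, h b c d := by
  rw [Finset.sum_comm]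
  exact Finset.sum_congr rfl fun c _ => Finset.sum_comm

-- swap sums 1 and 3 of four
lemma swap13 (h : Fin n → Fin n → Fin n → Fin n → ℂ) :
    ∑ i, ∑ j, ∑ k, ∑ l, h i j k l = ∑ k, ∑ j, ∑ i, ∑ l, h i j k l := by
  rw [Finset.sum_comm]
  rw [Finset.sum_congr rfl fun j (_ : j ∈ univ) => Finset.sum_comm]
  rw [Finset.sum_comm]


lemma ite_split {n : ℕ} (N : ℂ) (a b c d : Fin n) :
    (if (a = b ∧ c = d) ∨ (a = d ∧ c = b) then N else 0)
    = (if a = b then (if c = d then N else 0) else 0)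
      + (if c = b then (if a = d then N else 0) else 0)
      - (if a = b then (if a = d then (if a = c then N else 0) else 0) else 0) := by
  by_cases h1 : a = b <;> by_cases h2 : c = d <;> by_cases h3 : a = d <;>
    by_cases h4 : c = b <;> by_cases h5 : a = c <;> simp_all

lemma core (n : ℕ) (hn : 1 ≤ n) (κ : ℝ) (hκ : 0 ≤ κ)
    (R' : Fin n → Fin n → Fin n → Fin n → ℂ) (G' : Fin n → Fin n → ℂ)
    (hs1 : ∀ a b c d, R' a b c d = R' c b a d)
    (hH' : ∀ η : Fin n → ℂ,
      (∑ a, ∑ b, ∑ c, ∑ d,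
          R' a b c d * η a * (starRingEnd ℂ) (η b) * η c * (starRingEnd ℂ) (η d)).re
        ≤ -κ * ((∑ a, ∑ b, G' a b * η a * (starRingEnd ℂ) (η b)).re) ^ 2) :
    (∑ a, ∑ c, R' a a c c).re
      ≤ -κ * ((n + 1) / (2 * n)) * ((∑ a, G' a a).re) ^ 2 := by
  set N : ℂ := (4:ℂ)^n with hNdef
  have hN : N = (((4:ℝ)^n : ℝ) : ℂ) := by push_cast; rfl
  -- Identity A
  have idA : ∑ f : Fin n → ZMod 4, (∑ a, ∑ b, ∑ c, ∑ d,
      R' a b c d * om (f a) * (starRingEnd ℂ) (om (f b)) * om (f c) * (starRingEnd ℂ) (om (f d)))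
      = (∑ a, ∑ c, R' a a c c) * N + (∑ a, ∑ c, R' a c c a) * N - (∑ a, R' a a a a) * N := by
    rw [nest44]
    calc ∑ a, ∑ b, ∑ c, ∑ d, ∑ f : Fin n → ZMod 4,
        R' a b c d * om (f a) * (starRingEnd ℂ) (om (f b)) * om (f c) * (starRingEnd ℂ) (om (f d))
        = ∑ a, ∑ b, ∑ c, ∑ d, R' a b c d *
            (if (a = b ∧ c = d) ∨ (a = d ∧ c = b) then N else 0) := by
          refine Finset.sum_congr rfl fun a _ => Finset.sum_congr rfl fun b _ =>
            Finset.sum_congr rfl fun c _ => Finset.sum_congr rfl fun d _ => ?_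
          rw [show (∑ f : Fin n → ZMod 4, R' a b c d * om (f a) * (starRingEnd ℂ) (om (f b))
                * om (f c) * (starRingEnd ℂ) (om (f d)))
              = R' a b c d * ∑ f : Fin n → ZMod 4,
                om (f a) * (starRingEnd ℂ) (om (f b)) * om (f c) * (starRingEnd ℂ) (om (f d)) from by
            rw [Finset.mul_sum]; exact Finset.sum_congr rfl fun f _ => by ring]
          rw [W4]
      _ = ∑ a, ∑ c, ∑ d, ∑ b, R' a b c d *
            (if (a = b ∧ c = d) ∨ (a = d ∧ c = b) then N else 0) := by
          exact Finset.sum_congr rfl fun a _ => rot3 _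
      _ = ∑ a, ∑ c, ∑ d, ∑ b,
            (R' a b c d * (if a = b then (if c = d then N else 0) else 0)
             + R' a b c d * (if c = b then (if a = d then N else 0) else 0)
             - R' a b c d * (if a = b then (if a = d then (if a = c then N else 0) else 0) else 0)) := by
          refine Finset.sum_congr rfl fun a _ => Finset.sum_congr rfl fun c _ =>
            Finset.sum_congr rfl fun d _ => Finset.sum_congr rfl fun b _ => ?_
          rw [ite_split]; ring
      _ = (∑ a, ∑ c, R' a a c c) * N + (∑ a, ∑ c, R' a c c a) * N - (∑ a, R' a a a a) * N := by
          simp only [Finset.sum_add_distrib, Finset.sum_sub_distrib]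
          simp only [mul_ite, mul_zero, Finset.sum_ite_eq, Finset.mem_univ, if_true,
            Finset.sum_mul]
  -- Identity B
  have idB : ∑ f : Fin n → ZMod 4, (∑ a, ∑ b, G' a b * om (f a) * (starRingEnd ℂ) (om (f b)))
      = (∑ a, G' a a) * N := by
    rw [nest22]
    calc ∑ a, ∑ b, ∑ f : Fin n → ZMod 4, G' a b * om (f a) * (starRingEnd ℂ) (om (f b))
        = ∑ a, ∑ b, G' a b * (if a = b then N else 0) := by
          refine Finset.sum_congr rfl fun a _ => Finset.sum_congr rfl fun b _ => ?_
          rw [show (∑ f : Fin n → ZMod 4, G' a b * om (f a) * (starRingEnd ℂ) (om (f b)))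
              = G' a b * ∑ f : Fin n → ZMod 4, om (f a) * (starRingEnd ℂ) (om (f b)) from by
            rw [Finset.mul_sum]; exact Finset.sum_congr rfl fun f _ => by ring]
          rw [W2]
      _ = (∑ a, G' a a) * N := by
          simp only [mul_ite, mul_zero, Finset.sum_ite_eq, Finset.mem_univ, if_true,
            Finset.sum_mul]
  -- diagonal bound
  have diag : ∀ a : Fin n, (R' a a a a).re ≤ -κ * ((G' a a).re)^2 := by
    intro a
    have h := hH' (fun x => if x = a then 1 else 0)
    simp only [apply_ite (starRingEnd ℂ), map_one, map_zero, mul_ite, mul_one, mul_zero,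
      Finset.sum_ite_eq', Finset.mem_univ, if_true] at h
    exact h
  -- abbreviations
  set S : ℝ := (∑ a, ∑ c, R' a a c c).re with hSdef
  set T : ℝ := (∑ a, G' a a).re with hTdef
  set D : ℝ := (∑ a, R' a a a a).re with hDdef
  have hS2 : (∑ a, ∑ c, R' a c c a) = ∑ a, ∑ c, R' a a c c := by
    calc ∑ a, ∑ c, R' a c c a = ∑ a, ∑ c, R' c c a a :=
          Finset.sum_congr rfl fun a _ => Finset.sum_congr rfl fun c _ => hs1 a c c a
      _ = ∑ a, ∑ c, R' a a c c := Finset.sum_comm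
  set q : (Fin n → ZMod 4) → ℝ :=
    fun f => (∑ a, ∑ b, G' a b * om (f a) * (starRingEnd ℂ) (om (f b))).re with hqdef
  have lA : ∑ f : Fin n → ZMod 4, (∑ a, ∑ b, ∑ c, ∑ d,
      R' a b c d * om (f a) * (starRingEnd ℂ) (om (f b)) * om (f c)
        * (starRingEnd ℂ) (om (f d))).re = (2*S - D) * (4:ℝ)^n := by
    rw [← Complex.re_sum, idA, hS2]
    simp only [hN, Complex.sub_re, Complex.add_re, Complex.mul_re, Complex.ofReal_re,
      Complex.ofReal_im, mul_zero, sub_zero, hSdef, hDdef]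
    ring
  have lB : ∑ f : Fin n → ZMod 4, q f = T * (4:ℝ)^n := by
    rw [hqdef, ← Complex.re_sum, idB]
    simp only [hN, Complex.mul_re, Complex.ofReal_re, Complex.ofReal_im, mul_zero, sub_zero,
      hTdef]
  have hsum : ∑ f : Fin n → ZMod 4, (∑ a, ∑ b, ∑ c, ∑ d,
      R' a b c d * om (f a) * (starRingEnd ℂ) (om (f b)) * om (f c)
        * (starRingEnd ℂ) (om (f d))).re ≤ ∑ f : Fin n → ZMod 4, -κ * (q f)^2 :=
    Finset.sum_le_sum fun f _ => hH' (fun a => om (f a))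
  have hcard : ((Finset.univ : Finset (Fin n → ZMod 4)).card : ℝ) = (4:ℝ)^n := by
    rw [Finset.card_univ]
    rw [show Fintype.card (Fin n → ZMod 4) = 4^n by
      rw [Fintype.card_fun]; simp]
    push_cast; ring
  have cheb : (∑ f : Fin n → ZMod 4, q f)^2
      ≤ (4:ℝ)^n * ∑ f : Fin n → ZMod 4, (q f)^2 := by
    have := sq_sum_le_card_mul_sum_sq (s := (Finset.univ : Finset (Fin n → ZMod 4))) (f := q)
    rwa [hcard] at this
  have hqsq : (4:ℝ)^n * T^2 ≤ ∑ f : Fin n → ZMod 4, (q f)^2 := by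
    have h4 : (0:ℝ) < (4:ℝ)^n := by positivity
    rw [lB] at cheb
    nlinarith [cheb, h4]
  have main1 : 2*S - D ≤ -κ * T^2 := by
    have h4 : (0:ℝ) < (4:ℝ)^n := by positivity
    have : (2*S - D) * (4:ℝ)^n ≤ -κ * ((4:ℝ)^n * T^2) := by
      rw [← lA]
      calc _ ≤ ∑ f : Fin n → ZMod 4, -κ * (q f)^2 := hsum
        _ = -κ * ∑ f : Fin n → ZMod 4, (q f)^2 := by rw [Finset.mul_sum]
        _ ≤ -κ * ((4:ℝ)^n * T^2) := by
            apply mul_le_mul_of_nonpos_left hqsq (by linarith)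
    nlinarith [this, h4]
  have hDsum : D = ∑ a, (R' a a a a).re := Complex.re_sum _ _
  have hTsum : T = ∑ a, (G' a a).re := Complex.re_sum _ _
  have cheb2 : T^2 ≤ (n:ℝ) * ∑ a, ((G' a a).re)^2 := by
    have := sq_sum_le_card_mul_sum_sq (s := (Finset.univ : Finset (Fin n)))
      (f := fun a => (G' a a).re)
    simpa [← hTsum] using this
  have main2 : D ≤ -κ * ∑ a, ((G' a a).re)^2 := by
    rw [hDsum]
    calc ∑ a, (R' a a a a).re ≤ ∑ a, -κ * ((G' a a).re)^2 :=
          Finset.sum_le_sum fun a _ => diag a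
      _ = -κ * ∑ a, ((G' a a).re)^2 := by rw [Finset.mul_sum]
  -- final arithmetic
  have hnr : (1:ℝ) ≤ (n:ℝ) := by exact_mod_cast hn
  have hn0 : (0:ℝ) < (n:ℝ) := by linarith
  rw [show -κ * (((n:ℝ) + 1) / (2 * (n:ℝ))) * T ^ 2
      = (-κ * ((n:ℝ) + 1) * T ^ 2) / (2 * (n:ℝ)) from by ring, le_div_iff₀ (by linarith)]
  have hk3 : κ * T^2 ≤ κ * ((n:ℝ) * ∑ a, ((G' a a).re)^2) :=
    mul_le_mul_of_nonneg_left cheb2 hκ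
  nlinarith [main1, main2, hk3, mul_le_mul_of_nonneg_left main2 (le_of_lt hn0),
    mul_le_mul_of_nonneg_left main1 (le_of_lt hn0)]

lemma rev4 {n : ℕ} (h : Fin n → Fin n → Fin n → Fin n → ℂ) :
    ∑ d, ∑ c, ∑ b, ∑ a, h a b c d = ∑ a, ∑ b, ∑ c, ∑ d, h a b c d := by
  have := Fintype.sum_equiv
    (⟨fun p => (p.2.2.2, p.2.2.1, p.2.1, p.1), fun p => (p.2.2.2, p.2.2.1, p.2.1, p.1),
      fun p => rfl, fun p => rfl⟩ :
      (Fin n × Fin n × Fin n × Fin n) ≃ (Fin n × Fin n × Fin n × Fin n))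
    (fun p => h p.2.2.2 p.2.2.1 p.2.1 p.1)
    (fun q => h q.1 q.2.1 q.2.2.1 q.2.2.2) (fun p => rfl)
  simpa [Fintype.sum_prod_type] using this

lemma mul_sum4 {n : ℕ} (r : ℂ) (A B C D : Fin n → ℂ) :
    r * (∑ a, A a) * (∑ b, B b) * (∑ c, C c) * (∑ d, D d)
      = ∑ a, ∑ b, ∑ c, ∑ d, r * A a * B b * C c * D d := by
  rw [← rev4 (fun a b c d => r * A a * B b * C c * D d)]
  simp only [Finset.sum_mul, Finset.mul_sum]

lemma mul_sum2 {n : ℕ} (r : ℂ) (A B : Fin n → ℂ) :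
    r * (∑ a, A a) * (∑ b, B b) = ∑ a, ∑ b, r * A a * B b := by
  calc r * (∑ a, A a) * (∑ b, B b) = ∑ b, ∑ a, r * A a * B b := by
        simp only [Finset.sum_mul, Finset.mul_sum]
    _ = ∑ a, ∑ b, r * A a * B b := Finset.sum_comm

lemma nest2x2 {n : ℕ} (h : Fin n → Fin n → Fin n → Fin n → ℂ) :
    ∑ i, ∑ j, ∑ a, ∑ b, h i j a b = ∑ a, ∑ b, ∑ i, ∑ j, h i j a b := by
  have h4 := Finset.sum_comm (s := (univ : Finset (Fin n × Fin n)))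
    (t := (univ : Finset (Fin n × Fin n)))
    (f := fun p q => h p.1 p.2 q.1 q.2)
  simpa [Fintype.sum_prod_type] using h4

end RoydenAux

open RoydenAux in
theorem stmt6 (n : ℕ) (hn : 1 ≤ n) (κ : ℝ) (hκ : 0 ≤ κ)
    (gHat g : Matrix (Fin n) (Fin n) ℂ) (hgHat : gHat.PosDef) (hg : g.PosDef)
    (R : Fin n → Fin n → Fin n → Fin n → ℂ)
    (hsym1 : ∀ i j k l, R i j k l = R k j i l)
    (hsym2 : ∀ i j k l, R i j k l = R i l k j)
    (hconj : ∀ i j k l, R i j k l = starRingEnd ℂ (R j i l k))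
    (hH : ∀ ξ : Fin n → ℂ,
      (∑ i, ∑ j, ∑ k, ∑ l,
        R i j k l * ξ i * starRingEnd ℂ (ξ j) * ξ k * starRingEnd ℂ (ξ l)).re
        ≤ -κ * ((∑ i, ∑ j, gHat i j * ξ i * starRingEnd ℂ (ξ j)).re) ^ 2) :
    (∑ i, ∑ j, ∑ k, ∑ l, g⁻¹ j i * g⁻¹ l k * R i j k l).re
      ≤ -κ * ((n + 1) / (2 * n)) * ((∑ i, ∑ j, g⁻¹ j i * gHat i j).re) ^ 2 := by
  classical
  have hgi : (g⁻¹).PosDef := hg.inv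
  have hps : (g⁻¹).PosSemidef := hgi.posSemidef
  open scoped MatrixOrder in set B := CFC.sqrt (g⁻¹) with hBdef
  have hBB : B * B = g⁻¹ := by
    open scoped MatrixOrder in exact CFC.sqrt_mul_sqrt_self _ hps.nonneg
  have hBH : Bᴴ = B := by
    open scoped MatrixOrder in exact (Matrix.nonneg_iff_posSemidef.mp (CFC.sqrt_nonneg (g⁻¹))).1
  have hconjB : ∀ i j, (starRingEnd ℂ) (B i j) = B j i := by
    intro i j
    show star (B i j) = B j i
    rw [← Matrix.conjTranspose_apply, hBH]
  have hginv : ∀ i j, g⁻¹ j i = ∑ a, B a i * (starRingEnd ℂ) (B a j) := by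
    intro i j
    rw [← hBB, Matrix.mul_apply]
    exact Finset.sum_congr rfl fun a _ => by rw [hconjB a j, mul_comm]
  set R' : Fin n → Fin n → Fin n → Fin n → ℂ := fun a b c d =>
    ∑ i, ∑ j, ∑ k, ∑ l, R i j k l * B a i * (starRingEnd ℂ) (B b j) * B c k
      * (starRingEnd ℂ) (B d l) with hR'def
  set G' : Fin n → Fin n → ℂ := fun a b =>
    ∑ i, ∑ j, gHat i j * B a i * (starRingEnd ℂ) (B b j) with hG'def
  -- symmetry of R'
  have hs1' : ∀ a b c d, R' a b c d = R' c b a d := by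
    intro a b c d
    simp only [hR'def]
    show _ = ∑ i, ∑ j, ∑ k, ∑ l, R i j k l * B c i * (starRingEnd ℂ) (B b j) * B a k
      * (starRingEnd ℂ) (B d l)
    rw [swap13 (fun i j k l => R i j k l * B a i * (starRingEnd ℂ) (B b j) * B c k
      * (starRingEnd ℂ) (B d l))]
    refine Finset.sum_congr rfl fun i _ => Finset.sum_congr rfl fun j _ =>
      Finset.sum_congr rfl fun k _ => Finset.sum_congr rfl fun l _ => ?_
    rw [hsym1 k j i l]
    ring
  -- transformed hypothesis
  have hH' : ∀ η : Fin n → ℂ,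
      (∑ a, ∑ b, ∑ c, ∑ d,
          R' a b c d * η a * (starRingEnd ℂ) (η b) * η c * (starRingEnd ℂ) (η d)).re
        ≤ -κ * ((∑ a, ∑ b, G' a b * η a * (starRingEnd ℂ) (η b)).re) ^ 2 := by
    intro η
    have h := hH (fun i => ∑ a, η a * B a i)
    have expand1 : (∑ i, ∑ j, ∑ k, ∑ l,
        R i j k l * (∑ a, η a * B a i) * (starRingEnd ℂ) (∑ a, η a * B a j)
          * (∑ a, η a * B a k) * (starRingEnd ℂ) (∑ a, η a * B a l))
        = ∑ a, ∑ b, ∑ c, ∑ d,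
          R' a b c d * η a * (starRingEnd ℂ) (η b) * η c * (starRingEnd ℂ) (η d) := by
      calc ∑ i, ∑ j, ∑ k, ∑ l,
            R i j k l * (∑ a, η a * B a i) * (starRingEnd ℂ) (∑ a, η a * B a j)
              * (∑ a, η a * B a k) * (starRingEnd ℂ) (∑ a, η a * B a l)
          = ∑ i, ∑ j, ∑ k, ∑ l, ∑ a, ∑ b, ∑ c, ∑ d,
              R i j k l * (η a * B a i) * ((starRingEnd ℂ) (η b) * (starRingEnd ℂ) (B b j))
                * (η c * B c k) * ((starRingEnd ℂ) (η d) * (starRingEnd ℂ) (B d l)) := by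
            refine Finset.sum_congr rfl fun i _ => Finset.sum_congr rfl fun j _ =>
              Finset.sum_congr rfl fun k _ => Finset.sum_congr rfl fun l _ => ?_
            simp only [map_sum, map_mul]
            exact mul_sum4 _ _ _ _ _
        _ = ∑ a, ∑ b, ∑ c, ∑ d, ∑ i, ∑ j, ∑ k, ∑ l,
              R i j k l * (η a * B a i) * ((starRingEnd ℂ) (η b) * (starRingEnd ℂ) (B b j))
                * (η c * B c k) * ((starRingEnd ℂ) (η d) * (starRingEnd ℂ) (B d l)) :=
            nest8 _
        _ = ∑ a, ∑ b, ∑ c, ∑ d,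
              R' a b c d * η a * (starRingEnd ℂ) (η b) * η c * (starRingEnd ℂ) (η d) := by
            refine Finset.sum_congr rfl fun a _ => Finset.sum_congr rfl fun b _ =>
              Finset.sum_congr rfl fun c _ => Finset.sum_congr rfl fun d _ => ?_
            simp only [hR'def]
            simp only [Finset.sum_mul]
            refine Finset.sum_congr rfl fun i _ => Finset.sum_congr rfl fun j _ =>
              Finset.sum_congr rfl fun k _ => Finset.sum_congr rfl fun l _ => ?_
            ring
    have expand2 : (∑ i, ∑ j, gHat i j * (∑ a, η a * B a i)
          * (starRingEnd ℂ) (∑ a, η a * B a j))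
        = ∑ a, ∑ b, G' a b * η a * (starRingEnd ℂ) (η b) := by
      calc ∑ i, ∑ j, gHat i j * (∑ a, η a * B a i) * (starRingEnd ℂ) (∑ a, η a * B a j)
          = ∑ i, ∑ j, ∑ a, ∑ b, gHat i j * (η a * B a i)
              * ((starRingEnd ℂ) (η b) * (starRingEnd ℂ) (B b j)) := by
            refine Finset.sum_congr rfl fun i _ => Finset.sum_congr rfl fun j _ => ?_
            simp only [map_sum, map_mul]
            exact mul_sum2 _ _ _
        _ = ∑ a, ∑ b, ∑ i, ∑ j, gHat i j * (η a * B a i)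
              * ((starRingEnd ℂ) (η b) * (starRingEnd ℂ) (B b j)) := nest2x2 _
        _ = ∑ a, ∑ b, G' a b * η a * (starRingEnd ℂ) (η b) := by
            refine Finset.sum_congr rfl fun a _ => Finset.sum_congr rfl fun b _ => ?_
            simp only [hG'def]
            simp only [Finset.sum_mul]
            refine Finset.sum_congr rfl fun i _ => Finset.sum_congr rfl fun j _ => ?_
            ring
    rw [expand1, expand2] at h
    exact h
  -- goal identities
  have goalL : (∑ i, ∑ j, ∑ k, ∑ l, g⁻¹ j i * g⁻¹ l k * R i j k l)
      = ∑ a, ∑ c, R' a a c c := by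
    calc ∑ i, ∑ j, ∑ k, ∑ l, g⁻¹ j i * g⁻¹ l k * R i j k l
        = ∑ i, ∑ j, ∑ k, ∑ l, ∑ a, ∑ c,
            R i j k l * (B a i * (starRingEnd ℂ) (B a j)) * (B c k * (starRingEnd ℂ) (B c l)) := by
          refine Finset.sum_congr rfl fun i _ => Finset.sum_congr rfl fun j _ =>
            Finset.sum_congr rfl fun k _ => Finset.sum_congr rfl fun l _ => ?_
          rw [hginv i j, hginv k l]
          calc (∑ a, B a i * (starRingEnd ℂ) (B a j)) * (∑ c, B c k * (starRingEnd ℂ) (B c l))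
                * R i j k l
              = R i j k l * (∑ a, B a i * (starRingEnd ℂ) (B a j))
                * (∑ c, B c k * (starRingEnd ℂ) (B c l)) := by ring
            _ = ∑ a, ∑ c, R i j k l * (B a i * (starRingEnd ℂ) (B a j))
                * (B c k * (starRingEnd ℂ) (B c l)) := mul_sum2 _ _ _
      _ = ∑ a, ∑ c, ∑ i, ∑ j, ∑ k, ∑ l,
            R i j k l * (B a i * (starRingEnd ℂ) (B a j)) * (B c k * (starRingEnd ℂ) (B c l)) :=
          nest42 _
      _ = ∑ a, ∑ c, R' a a c c := by
          refine Finset.sum_congr rfl fun a _ => Finset.sum_congr rfl fun c _ => ?_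
          simp only [hR'def]
          refine Finset.sum_congr rfl fun i _ => Finset.sum_congr rfl fun j _ =>
            Finset.sum_congr rfl fun k _ => Finset.sum_congr rfl fun l _ => ?_
          ring
  have goalT : (∑ i, ∑ j, g⁻¹ j i * gHat i j) = ∑ a, G' a a := by
    calc ∑ i, ∑ j, g⁻¹ j i * gHat i j
        = ∑ i, ∑ j, ∑ a, gHat i j * B a i * (starRingEnd ℂ) (B a j) := by
          refine Finset.sum_congr rfl fun i _ => Finset.sum_congr rfl fun j _ => ?_
          rw [hginv i j, Finset.sum_mul]
          refine Finset.sum_congr rfl fun a _ => ?_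
          ring
      _ = ∑ a, ∑ i, ∑ j, gHat i j * B a i * (starRingEnd ℂ) (B a j) := nest21 _
      _ = ∑ a, G' a a := by
          refine Finset.sum_congr rfl fun a _ => ?_
          simp only [hG'def]
  rw [goalL, goalT]
  exact RoydenAux.core n hn κ hκ R' G' hs1' hH'
end

section
/- Let κ ≥ 0 and let R̂ be a Kähler curvature tensor on an n-dimensional Hermitian vector space (V, ĝ) with holomorphic sectional curvature ≤ −κ. For κ = 0 conclude: for any Hermitian positive-definite g, g^{i\bar j} g^{k\bar l} R̂_{i\bar j k\bar l} ≤ 0. -/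
open Complex Finset

section pulls
variable {M : Type*} [AddCommMonoid M]

lemma pull2 {α β : Type*} [Fintype α] [Fintype β] (f : β → α → M) :
    ∑ i, ∑ a, f i a = ∑ a, ∑ i, f i a := Finset.sum_comm

lemma pull3 {α β1 β2 : Type*} [Fintype α] [Fintype β1] [Fintype β2] (f : β1 → β2 → α → M) :
    ∑ i, ∑ j, ∑ a, f i j a = ∑ a, ∑ i, ∑ j, f i j a := by
  rw [show (∑ i, ∑ j, ∑ a, f i j a) = ∑ i, ∑ a, ∑ j, f i j a from
    Finset.sum_congr rfl fun i _ => pull2 _]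
  exact pull2 _

lemma pull4 {α β1 β2 β3 : Type*} [Fintype α] [Fintype β1] [Fintype β2] [Fintype β3]
    (f : β1 → β2 → β3 → α → M) :
    ∑ i, ∑ j, ∑ k, ∑ a, f i j k a = ∑ a, ∑ i, ∑ j, ∑ k, f i j k a := by
  rw [show (∑ i, ∑ j, ∑ k, ∑ a, f i j k a) = ∑ i, ∑ a, ∑ j, ∑ k, f i j k a from
    Finset.sum_congr rfl fun i _ => pull3 _]
  exact pull2 _

lemma pull5 {α β1 β2 β3 β4 : Type*} [Fintype α] [Fintype β1] [Fintype β2] [Fintype β3] [Fintype β4]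
    (f : β1 → β2 → β3 → β4 → α → M) :
    ∑ i, ∑ j, ∑ k, ∑ l, ∑ a, f i j k l a = ∑ a, ∑ i, ∑ j, ∑ k, ∑ l, f i j k l a := by
  rw [show (∑ i, ∑ j, ∑ k, ∑ l, ∑ a, f i j k l a) = ∑ i, ∑ a, ∑ j, ∑ k, ∑ l, f i j k l a from
    Finset.sum_congr rfl fun i _ => pull4 _]
  exact pull2 _

end pulls

noncomputable def om (z : ZMod 4) : ℂ := Complex.I ^ z.val

lemma I_pow_mod (m : ℕ) : Complex.I ^ (m % 4) = Complex.I ^ m := by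
  conv_rhs => rw [← Nat.div_add_mod m 4]
  rw [pow_add, pow_mul, Complex.I_pow_four, one_pow, one_mul]

lemma om_add (z w : ZMod 4) : om (z + w) = om z * om w := by
  unfold om
  rw [← pow_add, ZMod.val_add, I_pow_mod]

lemma om_zero : om 0 = 1 := by simp [om]

lemma conj_om (z : ZMod 4) : (starRingEnd ℂ) (om z) = om (-z) := by
  have h1 : (starRingEnd ℂ) (om z) * om z = 1 := by
    rw [mul_comm, Complex.mul_conj]
    have h : Complex.normSq (om z) = 1 := by
      unfold om
      rw [map_pow]
      simp [Complex.normSq_I]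
    rw [h]
    norm_num
  have h2 : om z * om (-z) = 1 := by rw [← om_add, add_neg_cancel, om_zero]
  calc (starRingEnd ℂ) (om z) = (starRingEnd ℂ) (om z) * (om z * om (-z)) := by rw [h2, mul_one]
    _ = ((starRingEnd ℂ) (om z) * om z) * om (-z) := by ring
    _ = om (-z) := by rw [h1, one_mul]

lemma om_ne_one (z : ZMod 4) (hz : z ≠ 0) : om z ≠ 1 := by
  have hlt : z.val < 4 := z.val_lt
  have h0 : z.val ≠ 0 := fun h => hz ((ZMod.val_eq_zero z).mp h)
  unfold om
  interval_cases h : z.val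
  · exact absurd rfl h0
  · intro hc
    simp only [pow_one] at hc
    have := congrArg Complex.im hc
    simp at this
  · rw [Complex.I_sq]; norm_num
  · intro hc
    rw [pow_succ, Complex.I_sq] at hc
    have : Complex.I = -1 := by linear_combination -hc
    simp [Complex.ext_iff] at this

lemma shift_zero {n : ℕ} (a b c d x0 : Fin n)
    (hne : ((if b = x0 then (1:ZMod 4) else 0) + (if d = x0 then 1 else 0)
        - (if a = x0 then 1 else 0) - (if c = x0 then 1 else 0)) ≠ 0) :
    ∑ ε : Fin n → ZMod 4, om (ε b + ε d - ε a - ε c) = 0 := by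
  classical
  set c0 : ZMod 4 := (if b = x0 then (1:ZMod 4) else 0) + (if d = x0 then 1 else 0)
        - (if a = x0 then 1 else 0) - (if c = x0 then 1 else 0) with hc0
  set δ : Fin n → ZMod 4 := fun x => if x = x0 then 1 else 0 with hδ
  set S := ∑ ε : Fin n → ZMod 4, om (ε b + ε d - ε a - ε c) with hS
  have key : ∀ ε : Fin n → ZMod 4,
      om ((ε + δ) b + (ε + δ) d - (ε + δ) a - (ε + δ) c)
        = om (ε b + ε d - ε a - ε c) * om c0 := by
    intro ε
    rw [← om_add]
    congr 1
    simp only [Pi.add_apply, hδ, hc0]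
    ring
  have hsum : S = S * om c0 := by
    conv_lhs => rw [hS, ← Equiv.sum_comp (Equiv.addRight δ)
      (fun ε : Fin n → ZMod 4 => om (ε b + ε d - ε a - ε c))]
    simp only [Equiv.coe_addRight]
    rw [show (∑ ε : Fin n → ZMod 4, om ((ε + δ) b + (ε + δ) d - (ε + δ) a - (ε + δ) c))
        = ∑ ε : Fin n → ZMod 4, om (ε b + ε d - ε a - ε c) * om c0 from
      Finset.sum_congr rfl fun ε _ => key ε]
    rw [← Finset.sum_mul]
  have h1 : S * (1 - om c0) = 0 := by
    rw [mul_sub, mul_one, sub_eq_zero]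
    exact hsum
  rcases mul_eq_zero.mp h1 with h | h
  · exact h
  · exact absurd ((sub_eq_zero.mp h).symm) (om_ne_one c0 hne)

lemma W_eval {n : ℕ} (a b c d : Fin n) :
    ∑ ε : Fin n → ZMod 4, om (ε b + ε d - ε a - ε c)
      = if (a = b ∧ c = d) ∨ (a = d ∧ b = c) then (4:ℂ)^n else 0 := by
  classical
  by_cases hcond : (a = b ∧ c = d) ∨ (a = d ∧ b = c)
  · rw [if_pos hcond]
    have harg : ∀ ε : Fin n → ZMod 4, ε b + ε d - ε a - ε c = 0 := by
      rcases hcond with ⟨h1, h2⟩ | ⟨h1, h2⟩ <;> subst h1 <;> subst h2 <;> intro ε <;> ring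
    rw [Finset.sum_congr rfl fun ε _ => by rw [harg ε, om_zero]]
    rw [Finset.sum_const, Finset.card_univ, Fintype.card_fun]
    simp [ZMod.card]
  · rw [if_neg hcond]
    push_neg at hcond
    obtain ⟨h1, h2⟩ := hcond
    by_cases hab : a = b
    · -- c ≠ d; take x0 = d
      have hcd : c ≠ d := h1 hab
      apply shift_zero a b c d d
      subst hab
      simp only [if_pos rfl, if_neg hcd]
      by_cases had : a = d <;> simp [had] <;> decide
    · by_cases had : a = d
      · -- b ≠ c; take x0 = b
        have hbc : b ≠ c := h2 had
        apply shift_zero a b c d b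
        subst had
        have hcb : c ≠ b := fun h => hbc h.symm
        simp only [if_pos rfl, if_neg hcb]
        by_cases hab' : a = b <;> simp [hab'] <;> decide
      · -- take x0 = a
        apply shift_zero a b c d a
        have hba : b ≠ a := fun h => hab h.symm
        have hda : d ≠ a := fun h => had h.symm
        simp only [if_pos rfl, if_neg hba, if_neg hda]
        by_cases hca : c = a <;> simp [hca] <;> decide

noncomputable def Tq (n : ℕ) (R : Fin n → Fin n → Fin n → Fin n → ℂ)
    (u1 u2 u3 u4 : Fin n → ℂ) : ℂ :=
  ∑ i, ∑ j, ∑ k, ∑ l,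
    R i j k l * (starRingEnd ℂ) (u1 i) * u2 j * (starRingEnd ℂ) (u3 k) * u4 l

lemma coef_eq (za zb ze zd : ZMod 4) :
    (starRingEnd ℂ) (om za) * om zb * (starRingEnd ℂ) (om ze) * om zd
      = om (zb + zd - za - ze) := by
  rw [conj_om, conj_om, ← om_add, ← om_add, ← om_add]
  exact congrArg om (by ring)

section TqLemmas
variable {n : ℕ} (R : Fin n → Fin n → Fin n → Fin n → ℂ)

lemma Tq_ex1 {ι : Type*} [Fintype ι] (c : ι → ℂ) (v : ι → Fin n → ℂ) (u2 u3 u4 : Fin n → ℂ) :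
    Tq n R (fun i => ∑ a, c a * v a i) u2 u3 u4
      = ∑ a, (starRingEnd ℂ) (c a) * Tq n R (v a) u2 u3 u4 := by
  unfold Tq
  calc (∑ i, ∑ j, ∑ k, ∑ l, R i j k l * (starRingEnd ℂ) (∑ a, c a * v a i) * u2 j
          * (starRingEnd ℂ) (u3 k) * u4 l)
      = ∑ i, ∑ j, ∑ k, ∑ l, ∑ a, (starRingEnd ℂ) (c a)
          * (R i j k l * (starRingEnd ℂ) (v a i) * u2 j * (starRingEnd ℂ) (u3 k) * u4 l) := by
        refine Finset.sum_congr rfl fun i _ => Finset.sum_congr rfl fun j _ =>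
          Finset.sum_congr rfl fun k _ => Finset.sum_congr rfl fun l _ => ?_
        rw [map_sum]
        simp only [map_mul, Finset.sum_mul, Finset.mul_sum]
        exact Finset.sum_congr rfl fun a _ => by ring
    _ = ∑ a, ∑ i, ∑ j, ∑ k, ∑ l, (starRingEnd ℂ) (c a)
          * (R i j k l * (starRingEnd ℂ) (v a i) * u2 j * (starRingEnd ℂ) (u3 k) * u4 l) :=
        pull5 _
    _ = ∑ a, (starRingEnd ℂ) (c a) * ∑ i, ∑ j, ∑ k, ∑ l,
          R i j k l * (starRingEnd ℂ) (v a i) * u2 j * (starRingEnd ℂ) (u3 k) * u4 l := by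
        refine Finset.sum_congr rfl fun a _ => ?_
        simp only [Finset.mul_sum]

lemma Tq_ex2 {ι : Type*} [Fintype ι] (c : ι → ℂ) (v : ι → Fin n → ℂ) (u1 u3 u4 : Fin n → ℂ) :
    Tq n R u1 (fun j => ∑ a, c a * v a j) u3 u4
      = ∑ a, c a * Tq n R u1 (v a) u3 u4 := by
  unfold Tq
  calc (∑ i, ∑ j, ∑ k, ∑ l, R i j k l * (starRingEnd ℂ) (u1 i) * (∑ a, c a * v a j)
          * (starRingEnd ℂ) (u3 k) * u4 l)
      = ∑ i, ∑ j, ∑ k, ∑ l, ∑ a, c a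
          * (R i j k l * (starRingEnd ℂ) (u1 i) * v a j * (starRingEnd ℂ) (u3 k) * u4 l) := by
        refine Finset.sum_congr rfl fun i _ => Finset.sum_congr rfl fun j _ =>
          Finset.sum_congr rfl fun k _ => Finset.sum_congr rfl fun l _ => ?_
        simp only [Finset.sum_mul, Finset.mul_sum]
        exact Finset.sum_congr rfl fun a _ => by ring
    _ = ∑ a, ∑ i, ∑ j, ∑ k, ∑ l, c a
          * (R i j k l * (starRingEnd ℂ) (u1 i) * v a j * (starRingEnd ℂ) (u3 k) * u4 l) :=
        pull5 _
    _ = ∑ a, c a * ∑ i, ∑ j, ∑ k, ∑ l,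
          R i j k l * (starRingEnd ℂ) (u1 i) * v a j * (starRingEnd ℂ) (u3 k) * u4 l := by
        refine Finset.sum_congr rfl fun a _ => ?_
        simp only [Finset.mul_sum]

lemma Tq_ex3 {ι : Type*} [Fintype ι] (c : ι → ℂ) (v : ι → Fin n → ℂ) (u1 u2 u4 : Fin n → ℂ) :
    Tq n R u1 u2 (fun k => ∑ a, c a * v a k) u4
      = ∑ a, (starRingEnd ℂ) (c a) * Tq n R u1 u2 (v a) u4 := by
  unfold Tq
  calc (∑ i, ∑ j, ∑ k, ∑ l, R i j k l * (starRingEnd ℂ) (u1 i) * u2 j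
          * (starRingEnd ℂ) (∑ a, c a * v a k) * u4 l)
      = ∑ i, ∑ j, ∑ k, ∑ l, ∑ a, (starRingEnd ℂ) (c a)
          * (R i j k l * (starRingEnd ℂ) (u1 i) * u2 j * (starRingEnd ℂ) (v a k) * u4 l) := by
        refine Finset.sum_congr rfl fun i _ => Finset.sum_congr rfl fun j _ =>
          Finset.sum_congr rfl fun k _ => Finset.sum_congr rfl fun l _ => ?_
        rw [map_sum]
        simp only [map_mul, Finset.sum_mul, Finset.mul_sum]
        exact Finset.sum_congr rfl fun a _ => by ring
    _ = ∑ a, ∑ i, ∑ j, ∑ k, ∑ l, (starRingEnd ℂ) (c a)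
          * (R i j k l * (starRingEnd ℂ) (u1 i) * u2 j * (starRingEnd ℂ) (v a k) * u4 l) :=
        pull5 _
    _ = ∑ a, (starRingEnd ℂ) (c a) * ∑ i, ∑ j, ∑ k, ∑ l,
          R i j k l * (starRingEnd ℂ) (u1 i) * u2 j * (starRingEnd ℂ) (v a k) * u4 l := by
        refine Finset.sum_congr rfl fun a _ => ?_
        simp only [Finset.mul_sum]

lemma Tq_ex4 {ι : Type*} [Fintype ι] (c : ι → ℂ) (v : ι → Fin n → ℂ) (u1 u2 u3 : Fin n → ℂ) :
    Tq n R u1 u2 u3 (fun l => ∑ a, c a * v a l)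
      = ∑ a, c a * Tq n R u1 u2 u3 (v a) := by
  unfold Tq
  calc (∑ i, ∑ j, ∑ k, ∑ l, R i j k l * (starRingEnd ℂ) (u1 i) * u2 j
          * (starRingEnd ℂ) (u3 k) * (∑ a, c a * v a l))
      = ∑ i, ∑ j, ∑ k, ∑ l, ∑ a, c a
          * (R i j k l * (starRingEnd ℂ) (u1 i) * u2 j * (starRingEnd ℂ) (u3 k) * v a l) := by
        refine Finset.sum_congr rfl fun i _ => Finset.sum_congr rfl fun j _ =>
          Finset.sum_congr rfl fun k _ => Finset.sum_congr rfl fun l _ => ?_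
        simp only [Finset.sum_mul, Finset.mul_sum]
        exact Finset.sum_congr rfl fun a _ => by ring
    _ = ∑ a, ∑ i, ∑ j, ∑ k, ∑ l, c a
          * (R i j k l * (starRingEnd ℂ) (u1 i) * u2 j * (starRingEnd ℂ) (u3 k) * v a l) :=
        pull5 _
    _ = ∑ a, c a * ∑ i, ∑ j, ∑ k, ∑ l,
          R i j k l * (starRingEnd ℂ) (u1 i) * u2 j * (starRingEnd ℂ) (u3 k) * v a l := by
        refine Finset.sum_congr rfl fun a _ => ?_
        simp only [Finset.mul_sum]

lemma Tq_swap24 (hsym2 : ∀ i j k l, R i j k l = R i l k j) (u1 u2 u3 u4 : Fin n → ℂ) :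
    Tq n R u1 u2 u3 u4 = Tq n R u1 u4 u3 u2 := by
  unfold Tq
  calc (∑ i, ∑ j, ∑ k, ∑ l, R i j k l * (starRingEnd ℂ) (u1 i) * u2 j
          * (starRingEnd ℂ) (u3 k) * u4 l)
      = ∑ i, ∑ j, ∑ k, ∑ l, R i l k j * (starRingEnd ℂ) (u1 i) * u2 j
          * (starRingEnd ℂ) (u3 k) * u4 l := by
        refine Finset.sum_congr rfl fun i _ => Finset.sum_congr rfl fun j _ =>
          Finset.sum_congr rfl fun k _ => Finset.sum_congr rfl fun l _ => ?_
        rw [← hsym2]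
    _ = ∑ i, ∑ l, ∑ k, ∑ j, R i l k j * (starRingEnd ℂ) (u1 i) * u2 j
          * (starRingEnd ℂ) (u3 k) * u4 l := by
        refine Finset.sum_congr rfl fun i _ => ?_
        exact (pull3 _).trans (Finset.sum_congr rfl fun l _ => pull2 _)
    _ = ∑ i, ∑ j, ∑ k, ∑ l, R i j k l * (starRingEnd ℂ) (u1 i) * u4 j
          * (starRingEnd ℂ) (u3 k) * u2 l := by
        refine Finset.sum_congr rfl fun i _ => Finset.sum_congr rfl fun j _ =>
          Finset.sum_congr rfl fun k _ => Finset.sum_congr rfl fun l _ => ?_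
        ring

end TqLemmas

lemma sum_ite_const {α : Type*} [Fintype α] (p : Prop) [Decidable p] (f : α → ℂ) :
    (∑ x, if p then f x else 0) = if p then ∑ x, f x else 0 := by
  split <;> simp

lemma ite_sum_collapse {n : ℕ} (T : Fin n → Fin n → Fin n → Fin n → ℂ) (C : ℂ) :
    (∑ a, ∑ b, ∑ e, ∑ d, (if (a = b ∧ e = d) ∨ (a = d ∧ b = e) then C else 0) * T a b e d)
      = C * (∑ a, ∑ b, T a a b b) + C * (∑ a, ∑ b, T a b b a) - C * (∑ a, T a a a a) := by
  classical
  have hsplit : ∀ (p q : Prop) (ip : Decidable p) (iq : Decidable q) (x : ℂ),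
      (if p ∨ q then C else 0) * x
        = (if p then C else 0) * x + (if q then C else 0) * x - (if p ∧ q then C else 0) * x := by
    intro p q ip iq x
    by_cases hp : p <;> by_cases hq : q <;> simp [hp, hq] <;> ring
  calc (∑ a, ∑ b, ∑ e, ∑ d, (if (a = b ∧ e = d) ∨ (a = d ∧ b = e) then C else 0) * T a b e d)
      = ∑ a, ∑ b, ∑ e, ∑ d,
          ((if (a = b ∧ e = d) then C else 0) * T a b e d
            + (if (a = d ∧ b = e) then C else 0) * T a b e d
            - (if ((a = b ∧ e = d) ∧ (a = d ∧ b = e)) then C else 0) * T a b e d) := by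
        refine Finset.sum_congr rfl fun a _ => Finset.sum_congr rfl fun b _ =>
          Finset.sum_congr rfl fun e _ => Finset.sum_congr rfl fun d _ => ?_
        exact hsplit _ _ _ _ _
    _ = (∑ a, ∑ b, ∑ e, ∑ d, (if (a = b ∧ e = d) then C else 0) * T a b e d)
        + (∑ a, ∑ b, ∑ e, ∑ d, (if (a = d ∧ b = e) then C else 0) * T a b e d)
        - (∑ a, ∑ b, ∑ e, ∑ d, (if ((a = b ∧ e = d) ∧ (a = d ∧ b = e)) then C else 0) * T a b e d) := by
        simp only [Finset.sum_add_distrib, Finset.sum_sub_distrib]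
    _ = C * (∑ a, ∑ b, T a a b b) + C * (∑ a, ∑ b, T a b b a) - C * (∑ a, T a a a a) := by
        congr 1
        · congr 1
          · -- piece 1
            have p1 : ∀ a b : Fin n, (∑ e, ∑ d, (if (a = b ∧ e = d) then C else 0) * T a b e d)
                = if a = b then ∑ e, C * T a b e e else 0 := by
              intro a b
              by_cases hab : a = b
              · simp only [hab, true_and, if_true]
                refine Finset.sum_congr rfl fun e _ => ?_
                simp [ite_mul, zero_mul, Finset.sum_ite_eq]
              · simp [hab]
            rw [Finset.sum_congr rfl fun a _ => Finset.sum_congr rfl fun b _ => p1 a b]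
            rw [Finset.sum_congr rfl fun a _ => Finset.sum_ite_eq univ a
              (fun b => ∑ e, C * T a b e e)]
            simp only [Finset.mem_univ, if_true]
            rw [Finset.mul_sum]
            refine Finset.sum_congr rfl fun a _ => ?_
            rw [Finset.mul_sum]
          · -- piece 2
            have p2 : ∀ a b : Fin n, (∑ e, ∑ d, (if (a = d ∧ b = e) then C else 0) * T a b e d)
                = C * T a b b a := by
              intro a b
              have inner : ∀ e, (∑ d, (if (a = d ∧ b = e) then C else 0) * T a b e d)
                  = if b = e then C * T a b e a else 0 := by
                intro e
                by_cases hbe : b = e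
                · simp only [hbe, and_true, if_true]
                  simp [ite_mul, zero_mul, Finset.sum_ite_eq]
                · simp [hbe]
              rw [Finset.sum_congr rfl fun e _ => inner e]
              rw [Finset.sum_ite_eq univ b (fun e => C * T a b e a)]
              simp
            rw [Finset.sum_congr rfl fun a _ => Finset.sum_congr rfl fun b _ => p2 a b]
            rw [Finset.mul_sum]
            refine Finset.sum_congr rfl fun a _ => ?_
            rw [Finset.mul_sum]
        · -- piece 3
          have p3 : ∀ a b : Fin n,
              (∑ e, ∑ d, (if ((a = b ∧ e = d) ∧ (a = d ∧ b = e)) then C else 0) * T a b e d)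
                = if a = b then C * T a a a a else 0 := by
            intro a b
            by_cases hab : a = b
            · subst hab
              rw [if_pos rfl]
              have inner : ∀ e : Fin n,
                  (∑ d, (if ((a = a ∧ e = d) ∧ (a = d ∧ a = e)) then C else 0) * T a a e d)
                    = if a = e then C * T a a e a else 0 := by
                intro e
                by_cases hae : a = e
                · subst hae
                  rw [if_pos rfl]
                  calc (∑ d, (if ((a = a ∧ a = d) ∧ (a = d ∧ a = a)) then C else 0) * T a a a d)
                      = ∑ d, if a = d then C * T a a a d else 0 :=
                        Finset.sum_congr rfl fun d _ => by by_cases h : a = d <;> simp [h]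
                    _ = C * T a a a a := by rw [Finset.sum_ite_eq]; simp
                · rw [if_neg hae]
                  calc (∑ d, (if ((a = a ∧ e = d) ∧ (a = d ∧ a = e)) then C else 0) * T a a e d)
                      = ∑ d : Fin n, (0:ℂ) := Finset.sum_congr rfl fun d _ => by
                        have h : ¬ ((a = a ∧ e = d) ∧ (a = d ∧ a = e)) := fun h => hae h.2.2
                        rw [if_neg h, zero_mul]
                    _ = 0 := Finset.sum_const_zero
              rw [Finset.sum_congr rfl fun e _ => inner e]
              rw [Finset.sum_ite_eq univ a (fun e => C * T a a e a)]
              simp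
            · rw [if_neg hab]
              calc (∑ e, ∑ d, (if ((a = b ∧ e = d) ∧ (a = d ∧ b = e)) then C else 0) * T a b e d)
                  = ∑ e : Fin n, ∑ d : Fin n, (0:ℂ) :=
                    Finset.sum_congr rfl fun e _ => Finset.sum_congr rfl fun d _ => by
                      have h : ¬ ((a = b ∧ e = d) ∧ (a = d ∧ b = e)) := fun h => hab h.1.1
                      rw [if_neg h, zero_mul]
                _ = 0 := by simp
          rw [Finset.sum_congr rfl fun a _ => Finset.sum_congr rfl fun b _ => p3 a b]
          rw [Finset.sum_congr rfl fun a _ => Finset.sum_ite_eq univ a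
            (fun b => C * T a a a a)]
          simp only [Finset.mem_univ, if_true]
          rw [Finset.mul_sum]

lemma sum_mul_sum_mul {α β : Type*} [Fintype α] [Fintype β] (x : α → ℂ) (y : β → ℂ) (r : ℂ) :
    (∑ a, x a) * (∑ b, y b) * r = ∑ a, ∑ b, x a * y b * r := by
  rw [Finset.sum_mul_sum, Finset.sum_mul]
  exact Finset.sum_congr rfl fun a _ => by rw [Finset.sum_mul]

open scoped ComplexOrder

theorem stmt7 (n : ℕ) (hn : 1 ≤ n)
    (gHat g : Matrix (Fin n) (Fin n) ℂ) (hgHat : gHat.PosDef) (hg : g.PosDef)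
    (R : Fin n → Fin n → Fin n → Fin n → ℂ)
    (hsym1 : ∀ i j k l, R i j k l = R k j i l)
    (hsym2 : ∀ i j k l, R i j k l = R i l k j)
    (hconj : ∀ i j k l, R i j k l = starRingEnd ℂ (R j i l k))
    (hH : ∀ ξ : Fin n → ℂ,
      (∑ i, ∑ j, ∑ k, ∑ l,
        R i j k l * ξ i * starRingEnd ℂ (ξ j) * ξ k * starRingEnd ℂ (ξ l)).re ≤ 0) :
    (∑ i, ∑ j, ∑ k, ∑ l, g⁻¹ j i * g⁻¹ l k * R i j k l).re ≤ 0 := by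
  classical
  have hP : (g⁻¹).PosDef := hg.inv
  have hPsd := hP.posSemidef
  open scoped MatrixOrder in
  set B := CFC.sqrt (g⁻¹) with hBdef
  open scoped MatrixOrder in
  have hBB : B * B = g⁻¹ := CFC.sqrt_mul_sqrt_self _ hPsd.nonneg
  open scoped MatrixOrder in
  have hBh : B.IsHermitian := (Matrix.nonneg_iff_posSemidef.mp (CFC.sqrt_nonneg (g⁻¹))).1
  set v : Fin n → Fin n → ℂ := fun a i => B i a with hvdef
  have hv : ∀ j i, g⁻¹ j i = ∑ a, v a j * (starRingEnd ℂ) (v a i) := by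
    intro j i
    rw [← hBB, Matrix.mul_apply]
    refine Finset.sum_congr rfl fun a _ => ?_
    have h := hBh.apply i a
    simp only [hvdef]
    rw [← h]
    simp [Complex.star_def]
  -- abbreviation
  set T : Fin n → Fin n → Fin n → Fin n → ℂ :=
    fun a b e d => Tq n R (v a) (v b) (v e) (v d) with hT
  -- step A
  have key1 : (∑ i, ∑ j, ∑ k, ∑ l, g⁻¹ j i * g⁻¹ l k * R i j k l)
      = ∑ a, ∑ b, T a a b b := by
    calc (∑ i, ∑ j, ∑ k, ∑ l, g⁻¹ j i * g⁻¹ l k * R i j k l)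
        = ∑ i, ∑ j, ∑ k, ∑ l, ∑ a, ∑ b,
            (v a j * (starRingEnd ℂ) (v a i)) * (v b l * (starRingEnd ℂ) (v b k)) * R i j k l := by
          refine Finset.sum_congr rfl fun i _ => Finset.sum_congr rfl fun j _ =>
            Finset.sum_congr rfl fun k _ => Finset.sum_congr rfl fun l _ => ?_
          rw [hv j i, hv l k, sum_mul_sum_mul]
      _ = ∑ a, ∑ i, ∑ j, ∑ k, ∑ l, ∑ b,
            (v a j * (starRingEnd ℂ) (v a i)) * (v b l * (starRingEnd ℂ) (v b k)) * R i j k l :=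
          pull5 _
      _ = ∑ a, ∑ b, ∑ i, ∑ j, ∑ k, ∑ l,
            (v a j * (starRingEnd ℂ) (v a i)) * (v b l * (starRingEnd ℂ) (v b k)) * R i j k l :=
          Finset.sum_congr rfl fun a _ => pull5 _
      _ = ∑ a, ∑ b, T a a b b := by
          refine Finset.sum_congr rfl fun a _ => Finset.sum_congr rfl fun b _ => ?_
          simp only [hT, Tq]
          refine Finset.sum_congr rfl fun i _ => Finset.sum_congr rfl fun j _ =>
            Finset.sum_congr rfl fun k _ => Finset.sum_congr rfl fun l _ => ?_
          ring
  -- nonpositivity of F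
  have hF : ∀ ξ : Fin n → ℂ, (Tq n R ξ ξ ξ ξ).re ≤ 0 := by
    intro ξ
    have h := hH (fun i => (starRingEnd ℂ) (ξ i))
    simp only [Complex.conj_conj] at h
    simpa [Tq] using h
  -- expansion
  have hexp : ∀ c : Fin n → ℂ,
      Tq n R (fun i => ∑ x, c x * v x i) (fun i => ∑ x, c x * v x i)
        (fun i => ∑ x, c x * v x i) (fun i => ∑ x, c x * v x i)
      = ∑ a, ∑ b, ∑ e, ∑ d,
          (starRingEnd ℂ) (c a) * c b * (starRingEnd ℂ) (c e) * c d * T a b e d := by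
    intro c
    calc (Tq n R (fun i => ∑ x, c x * v x i) (fun i => ∑ x, c x * v x i)
            (fun i => ∑ x, c x * v x i) (fun i => ∑ x, c x * v x i))
        = ∑ a, (starRingEnd ℂ) (c a) * Tq n R (v a) (fun i => ∑ x, c x * v x i)
            (fun i => ∑ x, c x * v x i) (fun i => ∑ x, c x * v x i) :=
          (Tq_ex1 R c v _ _ _)
      _ = ∑ a, (starRingEnd ℂ) (c a) * ∑ b, c b * Tq n R (v a) (v b)
            (fun i => ∑ x, c x * v x i) (fun i => ∑ x, c x * v x i) := by
          refine Finset.sum_congr rfl fun a _ => ?_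
          rw [Tq_ex2]
      _ = ∑ a, (starRingEnd ℂ) (c a) * ∑ b, c b * ∑ e, (starRingEnd ℂ) (c e) *
            Tq n R (v a) (v b) (v e) (fun i => ∑ x, c x * v x i) := by
          refine Finset.sum_congr rfl fun a _ => ?_
          congr 1
          refine Finset.sum_congr rfl fun b _ => ?_
          rw [Tq_ex3]
      _ = ∑ a, (starRingEnd ℂ) (c a) * ∑ b, c b * ∑ e, (starRingEnd ℂ) (c e) *
            ∑ d, c d * T a b e d := by
          refine Finset.sum_congr rfl fun a _ => ?_
          congr 1
          refine Finset.sum_congr rfl fun b _ => ?_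
          congr 1
          refine Finset.sum_congr rfl fun e _ => ?_
          rw [Tq_ex4]
      _ = ∑ a, ∑ b, ∑ e, ∑ d,
            (starRingEnd ℂ) (c a) * c b * (starRingEnd ℂ) (c e) * c d * T a b e d := by
          simp only [Finset.mul_sum]
          refine Finset.sum_congr rfl fun a _ => Finset.sum_congr rfl fun b _ =>
            Finset.sum_congr rfl fun e _ => Finset.sum_congr rfl fun d _ => ?_
          ring
  -- averaging
  have havg : (∑ ε : Fin n → ZMod 4, Tq n R (fun i => ∑ x, om (ε x) * v x i)
        (fun i => ∑ x, om (ε x) * v x i) (fun i => ∑ x, om (ε x) * v x i)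
        (fun i => ∑ x, om (ε x) * v x i))
      = (4:ℂ)^n * (2 * (∑ a, ∑ b, T a a b b) - ∑ a, T a a a a) := by
    calc (∑ ε : Fin n → ZMod 4, Tq n R (fun i => ∑ x, om (ε x) * v x i)
          (fun i => ∑ x, om (ε x) * v x i) (fun i => ∑ x, om (ε x) * v x i)
          (fun i => ∑ x, om (ε x) * v x i))
        = ∑ ε : Fin n → ZMod 4, ∑ a, ∑ b, ∑ e, ∑ d,
            (starRingEnd ℂ) (om (ε a)) * om (ε b) * (starRingEnd ℂ) (om (ε e)) * om (ε d)
              * T a b e d :=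
          (Finset.sum_congr rfl fun ε _ => hexp (fun x => om (ε x)))
      _ = ∑ a, ∑ b, ∑ e, ∑ d, ∑ ε : Fin n → ZMod 4,
            (starRingEnd ℂ) (om (ε a)) * om (ε b) * (starRingEnd ℂ) (om (ε e)) * om (ε d)
              * T a b e d :=
          ((pull5 _).symm)
      _ = ∑ a, ∑ b, ∑ e, ∑ d,
            (if (a = b ∧ e = d) ∨ (a = d ∧ b = e) then (4:ℂ)^n else 0) * T a b e d := by
          refine Finset.sum_congr rfl fun a _ => Finset.sum_congr rfl fun b _ =>
            Finset.sum_congr rfl fun e _ => Finset.sum_congr rfl fun d _ => ?_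
          rw [← Finset.sum_mul]
          congr 1
          rw [← W_eval a b e d]
          exact Finset.sum_congr rfl fun ε _ => coef_eq _ _ _ _
      _ = (4:ℂ)^n * (∑ a, ∑ b, T a a b b) + (4:ℂ)^n * (∑ a, ∑ b, T a b b a)
            - (4:ℂ)^n * (∑ a, T a a a a) := (ite_sum_collapse T ((4:ℂ)^n))
      _ = (4:ℂ)^n * (2 * (∑ a, ∑ b, T a a b b) - ∑ a, T a a a a) := by
          rw [show (∑ a, ∑ b, T a b b a) = ∑ a, ∑ b, T a a b b from
            Finset.sum_congr rfl fun a _ => Finset.sum_congr rfl fun b _ =>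
              Tq_swap24 R hsym2 _ _ _ _]
          ring
  -- conclusion
  set S := ∑ a, ∑ b, T a a b b with hS
  set D := ∑ a, T a a a a with hD
  have hEre : ((4:ℂ)^n * (2 * S - D)).re ≤ 0 := by
    rw [← havg, Complex.re_sum]
    apply Finset.sum_nonpos
    intro ε _
    exact hF _
  have hDre : D.re ≤ 0 := by
    rw [hD, Complex.re_sum]
    apply Finset.sum_nonpos
    intro a _
    exact hF _
  have h4 : (4:ℂ)^n = (((4:ℝ)^n : ℝ) : ℂ) := by push_cast; ring
  rw [h4, Complex.re_ofReal_mul] at hEre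
  have hw : (2 * S - D).re = 2 * S.re - D.re := by
    simp [Complex.sub_re, Complex.mul_re]
  rw [hw] at hEre
  have hpos : (0:ℝ) < (4:ℝ)^n := by positivity
  have hSre : S.re ≤ 0 := by
    have h1 : 2 * S.re - D.re ≤ 0 := by
      by_contra hc
      push_neg at hc
      nlinarith
    linarith
  rw [key1]
  exact hSre
end
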